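/- arXiv:2605.30153 — 4 statements merged into one kernel-verified Lean document; each statement's English description precedes it below -/
import Mathlib

section
/- Let V ⊆ R^d be a k-dimensional linear subspace with orthonormal basis matrix A ∈ R^{d×k} (AᵀA = I_k), and let μ be a probability measure supported on V with μ = (A)_# ν for a probability measure ν on R^k. Then for t > 0, the score of μ ∗ N(0, t I_d) satisfies s_t(x) = −(x − A Aᵀ x)/t + A s_t^low(Aᵀ x), where s_t^low is the score of ν ∗ N(0, t I_k). -/
open MeasureTheory Real

/-- Density of `N(0, t I_m)` on `ℝ^m`. -/
noncomputable def gpdf (m : ℕ) (t : ℝ) (x : EuclideanSpace ℝ (Fin m)) : ℝ :=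
  (2 * π * t) ^ (-(m : ℝ) / 2) * Real.exp (-‖x‖ ^ 2 / (2 * t))

section helpers

open InnerProductSpace

local notation "⟪" x ", " y "⟫" => @inner ℝ _ _ x y

variable {m : ℕ} {t : ℝ}

lemma two_pi_t_pos (ht : 0 < t) : 0 < 2 * π * t := by positivity

lemma gpdf_pos (ht : 0 < t) (x : EuclideanSpace ℝ (Fin m)) : 0 < gpdf m t x := by
  unfold gpdf
  have := two_pi_t_pos ht
  positivity

lemma gpdf_le (ht : 0 < t) (x : EuclideanSpace ℝ (Fin m)) :
    gpdf m t x ≤ (2 * π * t) ^ (-(m : ℝ) / 2) := by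
  unfold gpdf
  have h1 : Real.exp (-‖x‖ ^ 2 / (2 * t)) ≤ 1 := by
    rw [Real.exp_le_one_iff]
    have : (0:ℝ) ≤ ‖x‖ ^ 2 := by positivity
    have h2 : (0:ℝ) < 2 * t := by linarith
    rw [div_nonpos_iff]
    right; constructor <;> nlinarith
  have h0 : (0:ℝ) < (2 * π * t) ^ (-(m : ℝ) / 2) :=
    Real.rpow_pos_of_pos (two_pi_t_pos ht) _
  nlinarith

lemma gpdf_cont (ht : 0 < t) : Continuous (gpdf m t) := by
  unfold gpdf
  fun_prop

lemma r_exp_bound (ht : 0 < t) (r : ℝ) (hr : 0 ≤ r) :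
    r * Real.exp (-r ^ 2 / (2 * t)) ≤ Real.sqrt (2 * t) := by
  have h2t : (0:ℝ) < 2 * t := by linarith
  have hs : Real.sqrt (2 * t) * Real.sqrt (2 * t) = 2 * t :=
    Real.mul_self_sqrt h2t.le
  by_cases h : r ^ 2 ≤ 2 * t
  · have hr' : r ≤ Real.sqrt (2 * t) := by
      rw [show r = Real.sqrt (r ^ 2) by rw [Real.sqrt_sq hr]]
      exact Real.sqrt_le_sqrt h
    have he : Real.exp (-r ^ 2 / (2 * t)) ≤ 1 := by
      rw [Real.exp_le_one_iff, div_nonpos_iff]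
      right; constructor <;> nlinarith
    have he0 : 0 < Real.exp (-r ^ 2 / (2 * t)) := Real.exp_pos _
    nlinarith
  · push_neg at h
    have hr0 : 0 < r := by nlinarith
    have hkey : r ^ 2 / (2 * t) ≤ Real.exp (r ^ 2 / (2 * t)) := by
      have := Real.add_one_le_exp (r ^ 2 / (2 * t))
      linarith
    have hq : 1 < r ^ 2 / (2 * t) := (one_lt_div h2t).2 h
    have he : Real.exp (-r ^ 2 / (2 * t)) ≤ 2 * t / r ^ 2 := by
      rw [neg_div, Real.exp_neg]
      rw [inv_le_iff_one_le_mul₀ (Real.exp_pos _)]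
      calc (1:ℝ) = (2 * t / r ^ 2) * (r ^ 2 / (2 * t)) := by
            field_simp
        _ ≤ 2 * t / r ^ 2 * Real.exp (r ^ 2 / (2 * t)) := by
            apply mul_le_mul_of_nonneg_left hkey
            positivity
    have hsr : Real.sqrt (2 * t) ≤ r := by
      have : Real.sqrt (2 * t) ≤ Real.sqrt (r ^ 2) := Real.sqrt_le_sqrt h.le
      rwa [Real.sqrt_sq hr0.le] at this
    have hsp : 0 < Real.sqrt (2 * t) := Real.sqrt_pos.2 h2t
    calc r * Real.exp (-r ^ 2 / (2 * t)) ≤ r * (2 * t / r ^ 2) := by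
          apply mul_le_mul_of_nonneg_left he hr0.le
      _ = 2 * t / r := by field_simp
      _ ≤ 2 * t / Real.sqrt (2 * t) := by
          apply div_le_div_of_nonneg_left h2t.le hsp hsr
      _ = Real.sqrt (2 * t) := by
          rw [eq_comm, eq_div_iff hsp.ne', hs]

lemma hasFDerivAt_gpdf (ht : 0 < t) (y w : EuclideanSpace ℝ (Fin m)) :
    HasFDerivAt (fun v => gpdf m t (v - y))
      ((-t⁻¹ * gpdf m t (w - y)) • (innerSL ℝ (w - y))) w := by
  have h0 : HasFDerivAt (fun v : EuclideanSpace ℝ (Fin m) => v - y)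
      (ContinuousLinearMap.id ℝ _) w := (hasFDerivAt_id w).sub_const y
  have h1 := h0.inner ℝ h0
  set q : ℝ := ⟪w - y, w - y⟫ with hq
  have h2 : HasDerivAt (fun s : ℝ => (2 * π * t) ^ (-(m : ℝ) / 2) * Real.exp (-s / (2 * t)))
      ((2 * π * t) ^ (-(m : ℝ) / 2) * (Real.exp (-q / (2 * t)) * (-(2 * t)⁻¹))) q := by
    have hb : HasDerivAt (fun s : ℝ => -s / (2 * t)) (-(2 * t)⁻¹) q := by
      simpa [neg_div] using ((hasDerivAt_id q).neg.div_const (2 * t))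
    exact (hb.exp).const_mul _
  have h3 := h2.comp_hasFDerivAt w h1
  have hfeq : (fun v : EuclideanSpace ℝ (Fin m) =>
      (2 * π * t) ^ (-(m : ℝ) / 2) * Real.exp (-⟪v - y, v - y⟫ / (2 * t)))
      = fun v => gpdf m t (v - y) := by
    funext v
    rw [real_inner_self_eq_norm_sq]
    rfl
  simp only [Function.comp_def] at h3
  rw [hfeq] at h3
  refine h3.congr_fderiv ?_
  ext h
  have hBh : ⟪w - y, w - y⟫ = ‖w - y‖ ^ 2 := real_inner_self_eq_norm_sq _
  simp only [ContinuousLinearMap.smul_apply, ContinuousLinearMap.coe_comp',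
    Function.comp_apply, fderivInnerCLM_apply, ContinuousLinearMap.prod_apply,
    ContinuousLinearMap.coe_id', id_eq, innerSL_apply_apply, smul_eq_mul]
  rw [real_inner_comm h (w - y)]
  unfold gpdf
  rw [hq, hBh]
  ring

end helpers

section main

open InnerProductSpace

local notation "⟪" x ", " y "⟫" => @inner ℝ _ _ x y

variable {k : ℕ} {t : ℝ}

lemma gpdf_int (ht : 0 < t) (ν : Measure (EuclideanSpace ℝ (Fin k))) [IsProbabilityMeasure ν]
    (w : EuclideanSpace ℝ (Fin k)) :
    Integrable (fun y => gpdf k t (w - y)) ν := by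
  apply (integrable_const ((2 * π * t) ^ (-(k : ℝ) / 2))).mono'
  · exact ((gpdf_cont ht).comp (continuous_const.sub continuous_id)).aestronglyMeasurable
  · filter_upwards with y
    rw [Real.norm_of_nonneg (gpdf_pos ht _).le]
    exact gpdf_le ht _

lemma gpdf_integral_pos (ht : 0 < t) (ν : Measure (EuclideanSpace ℝ (Fin k)))
    [IsProbabilityMeasure ν] (w : EuclideanSpace ℝ (Fin k)) :
    0 < ∫ y, gpdf k t (w - y) ∂ν := by
  rw [integral_pos_iff_support_of_nonneg (fun y => (gpdf_pos ht _).le) (gpdf_int ht ν w)]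
  have : Function.support (fun y => gpdf k t (w - y)) = Set.univ := by
    ext y; simp [Function.mem_support, (gpdf_pos ht (w - y)).ne']
  rw [this]
  simp

set_option maxHeartbeats 1000000 in
set_option synthInstance.maxHeartbeats 200000 in
lemma lowdim_diff (ht : 0 < t) (ν : Measure (EuclideanSpace ℝ (Fin k)))
    [IsProbabilityMeasure ν] (w₀ : EuclideanSpace ℝ (Fin k)) :
    DifferentiableAt ℝ (fun w => ∫ y, gpdf k t (w - y) ∂ν) w₀ := by
  set F' : EuclideanSpace ℝ (Fin k) → EuclideanSpace ℝ (Fin k) →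
      EuclideanSpace ℝ (Fin k) →L[ℝ] ℝ :=
    fun w y => (-t⁻¹ * gpdf k t (w - y)) • (innerSL ℝ (w - y)) with hF'
  have key : HasFDerivAt (fun w => ∫ y, gpdf k t (w - y) ∂ν) (∫ y, F' w₀ y ∂ν) w₀ := by
    apply hasFDerivAt_integral_of_dominated_of_fderiv_le
      (bound := fun _ => t⁻¹ * ((2 * π * t) ^ (-(k : ℝ) / 2) * Real.sqrt (2 * t)))
      (s := Metric.ball w₀ 1) (Metric.ball_mem_nhds w₀ one_pos)
    · filter_upwards with w
      exact ((gpdf_cont ht).comp ((continuous_const.sub continuous_id))).aestronglyMeasurable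
    · exact gpdf_int ht ν w₀
    · apply Continuous.aestronglyMeasurable
      show Continuous fun y => (-t⁻¹ * gpdf k t (w₀ - y)) • (innerSL ℝ (w₀ - y))
      apply Continuous.fun_smul
      · exact continuous_const.mul ((gpdf_cont ht).comp (continuous_const.sub continuous_id))
      · exact (innerSL ℝ).continuous.comp (continuous_const.sub continuous_id)
    · filter_upwards with y
      intro w _
      rw [hF']
      have h1 : ‖(-t⁻¹ * gpdf k t (w - y)) • (innerSL ℝ (w - y))‖
          ≤ (t⁻¹ * gpdf k t (w - y)) * ‖w - y‖ := by
        refine (norm_smul_le (-t⁻¹ * gpdf k t (w - y)) (innerSL ℝ (w - y))).trans ?_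
        rw [innerSL_apply_norm, Real.norm_eq_abs, abs_mul, abs_neg, abs_inv,
          abs_of_pos ht, abs_of_pos (gpdf_pos ht _)]
      refine h1.trans ?_
      unfold gpdf
      have hb := r_exp_bound ht ‖w - y‖ (norm_nonneg _)
      have h0 : (0:ℝ) < (2 * π * t) ^ (-(k : ℝ) / 2) :=
        Real.rpow_pos_of_pos (two_pi_t_pos ht) _
      have hti : (0:ℝ) < t⁻¹ := by positivity
      calc t⁻¹ * ((2 * π * t) ^ (-(k : ℝ) / 2) * Real.exp (-‖w - y‖ ^ 2 / (2 * t))) * ‖w - y‖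
          = (t⁻¹ * (2 * π * t) ^ (-(k : ℝ) / 2)) * (‖w - y‖ * Real.exp (-‖w - y‖ ^ 2 / (2 * t))) := by
            ring
        _ ≤ (t⁻¹ * (2 * π * t) ^ (-(k : ℝ) / 2)) * Real.sqrt (2 * t) := by
            apply mul_le_mul_of_nonneg_left hb; positivity
        _ = t⁻¹ * ((2 * π * t) ^ (-(k : ℝ) / 2) * Real.sqrt (2 * t)) := by ring
    · exact integrable_const _
    · filter_upwards with y
      intro w _
      exact hasFDerivAt_gpdf ht y w
  exact key.differentiableAt

end main

section proof

open InnerProductSpace ContinuousLinearMap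

local notation "⟪" x ", " y "⟫" => @inner ℝ _ _ x y

set_option maxHeartbeats 1000000 in
set_option synthInstance.maxHeartbeats 400000 in
/-- Normal-tangent decomposition of the smoothed score of a subspace-supported
distribution `μ = A_# ν`:
`s_t(x) = −(x − AAᵀx)/t + A s_t^low(Aᵀ x)`. -/
theorem stmt3 {d k : ℕ} (A : EuclideanSpace ℝ (Fin k) →L[ℝ] EuclideanSpace ℝ (Fin d))
    (hA : ∀ z, ContinuousLinearMap.adjoint A (A z) = z)
    (ν : Measure (EuclideanSpace ℝ (Fin k))) [IsProbabilityMeasure ν]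
    (t : ℝ) (ht : 0 < t) (x : EuclideanSpace ℝ (Fin d)) :
    gradient (fun z => Real.log (∫ y, gpdf d t (z - A y) ∂ν)) x
      = (-t⁻¹) • (x - A (ContinuousLinearMap.adjoint A x))
        + A (gradient (fun w => Real.log (∫ y, gpdf k t (w - y) ∂ν))
            (ContinuousLinearMap.adjoint A x)) := by
  set At := ContinuousLinearMap.adjoint A with hAt
  set B : EuclideanSpace ℝ (Fin d) →L[ℝ] EuclideanSpace ℝ (Fin d) :=
    ContinuousLinearMap.id ℝ _ - A.comp At with hB
  have hBapp : ∀ z, B z = z - A (At z) := fun z => rfl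
  have hAtB : ∀ z, At (B z) = 0 := by
    intro z
    rw [hBapp, map_sub, hA]
    simp
  -- inner products
  have hinner_BA : ∀ z u, ⟪B z, A u⟫ = 0 := by
    intro z u
    rw [← ContinuousLinearMap.adjoint_inner_left A u (B z), ← hAt, hAtB]
    simp
  have hnormA : ∀ u, ‖A u‖ = ‖u‖ := by
    intro u
    have : ⟪A u, A u⟫ = ⟪u, u⟫ := by
      rw [← ContinuousLinearMap.adjoint_inner_left A u (A u), ← hAt, hA]
    rw [real_inner_self_eq_norm_sq, real_inner_self_eq_norm_sq] at this
    have h1 := norm_nonneg (A u); have h2 := norm_nonneg u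
    nlinarith
  -- norm decomposition
  have hnorm : ∀ z y, ‖z - A y‖ ^ 2 = ‖B z‖ ^ 2 + ‖At z - y‖ ^ 2 := by
    intro z y
    have hdecomp : z - A y = B z + A (At z - y) := by
      rw [hBapp, map_sub]; abel
    rw [hdecomp, @norm_add_sq_real, hinner_BA, hnormA]
    ring
  -- constants
  have h2pt : (0:ℝ) < 2 * π * t := two_pi_t_pos ht
  set c : ℝ := (2 * π * t) ^ (((k : ℝ) - d) / 2) with hc
  have hcpos : 0 < c := Real.rpow_pos_of_pos h2pt _
  -- pointwise factorization of the integrand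
  have hfact : ∀ z y, gpdf d t (z - A y)
      = (c * Real.exp (-‖B z‖ ^ 2 / (2 * t))) * gpdf k t (At z - y) := by
    intro z y
    unfold gpdf
    rw [hnorm z y]
    have hexp : (-(d : ℝ) / 2) = ((k : ℝ) - d) / 2 + (-(k : ℝ) / 2) := by ring
    rw [hexp, Real.rpow_add h2pt]
    rw [show -(‖B z‖ ^ 2 + ‖At z - y‖ ^ 2) / (2 * t)
      = -‖B z‖ ^ 2 / (2 * t) + -‖At z - y‖ ^ 2 / (2 * t) by ring, Real.exp_add]
    ring
  -- integral factorization
  have hint : ∀ z, (∫ y, gpdf d t (z - A y) ∂ν)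
      = (c * Real.exp (-‖B z‖ ^ 2 / (2 * t))) * ∫ y, gpdf k t (At z - y) ∂ν := by
    intro z
    rw [← integral_const_mul]
    congr 1
    funext y
    exact hfact z y
  -- the low-dimensional log-density
  set f : EuclideanSpace ℝ (Fin k) → ℝ := fun w => ∫ y, gpdf k t (w - y) ∂ν with hf
  have hfpos : ∀ w, 0 < f w := fun w => gpdf_integral_pos ht ν w
  set L : EuclideanSpace ℝ (Fin k) → ℝ := fun w => Real.log (f w) with hL
  -- log decomposition
  have hlog : (fun z => Real.log (∫ y, gpdf d t (z - A y) ∂ν))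
      = fun z => (Real.log c + (-‖B z‖ ^ 2 / (2 * t))) + L (At z) := by
    funext z
    rw [hint z]
    rw [Real.log_mul (by positivity) (hfpos (At z)).ne',
      Real.log_mul hcpos.ne' (Real.exp_pos _).ne', Real.log_exp]
  rw [hlog]
  -- gradient of the quadratic part
  have hquad : HasFDerivAt (fun z : EuclideanSpace ℝ (Fin d) => -‖B z‖ ^ 2 / (2 * t))
      (toDual ℝ _ ((-t⁻¹) • (B x))) x := by
    have h1 := (B.hasFDerivAt (x := x)).inner ℝ (B.hasFDerivAt (x := x))
    have h2 : HasFDerivAt (fun z : EuclideanSpace ℝ (Fin d) => -‖B z‖ ^ 2 / (2 * t))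
        ((-(2 * t)⁻¹) • ((fderivInnerCLM ℝ (B x, B x)).comp (B.prod B))) x := by
      have h3 := h1.const_smul (-(2 * t)⁻¹)
      refine h3.congr_of_eventuallyEq (Filter.Eventually.of_forall fun z => ?_)
      show _ = -(2 * t)⁻¹ • ⟪B z, B z⟫
      rw [real_inner_self_eq_norm_sq, smul_eq_mul]
      ring
    refine h2.congr_fderiv ?_
    ext h
    simp only [toDual_apply_apply, ContinuousLinearMap.smul_apply, ContinuousLinearMap.coe_comp',
      Function.comp_apply, fderivInnerCLM_apply, ContinuousLinearMap.prod_apply,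
      smul_eq_mul]
    have hBB : ⟪B x, B h⟫ = ⟪B x, h⟫ := by
      rw [hBapp x, hBapp h, inner_sub_right]
      have : ⟪B x, A (At h)⟫ = 0 := hinner_BA x (At h)
      rw [hBapp] at this
      rw [this, sub_zero]
    have hc : ⟪B h, B x⟫ = ⟪B x, h⟫ := by rw [real_inner_comm]; exact hBB
    rw [real_inner_smul_left, hc, hBB]
    ring
  -- gradient of the composed low-dim part
  have hdiffL : DifferentiableAt ℝ L (At x) := by
    have hdf : DifferentiableAt ℝ f (At x) := lowdim_diff ht ν (At x)
    exact hdf.log (hfpos (At x)).ne'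
  set G : EuclideanSpace ℝ (Fin k) := gradient L (At x) with hG
  have hGL : HasGradientAt L G (At x) := hdiffL.hasGradientAt
  have hcomp : HasFDerivAt (fun z : EuclideanSpace ℝ (Fin d) => L (At z))
      (toDual ℝ _ (A G)) x := by
    have h1 : HasFDerivAt L (toDual ℝ _ G) (At x) := hGL.hasFDerivAt
    have h2 := h1.comp x (At.hasFDerivAt (x := x))
    refine h2.congr_fderiv ?_
    ext h
    simp only [toDual_apply_apply, ContinuousLinearMap.coe_comp', Function.comp_apply]
    rw [← ContinuousLinearMap.adjoint_inner_right A, ← hAt]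
  -- assemble
  have hconst : HasFDerivAt (fun _ : EuclideanSpace ℝ (Fin d) => Real.log c)
      (0 : EuclideanSpace ℝ (Fin d) →L[ℝ] ℝ) x := hasFDerivAt_const _ _
  have htotal := (hconst.add hquad).add hcomp
  have hD : ((0 : EuclideanSpace ℝ (Fin d) →L[ℝ] ℝ) + toDual ℝ _ ((-t⁻¹) • (B x)))
      + toDual ℝ _ (A G) = toDual ℝ _ ((-t⁻¹) • (B x) + A G) := by
    rw [zero_add, ← map_add]
  rw [hD] at htotal
  have : HasGradientAt (fun z => (Real.log c + (-‖B z‖ ^ 2 / (2 * t))) + L (At z))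
      ((-t⁻¹) • (B x) + A G) x := htotal
  exact this.gradient

end proof
end

section
/- Let μ be a probability measure supported on a k-dimensional subspace V of R^d with orthonormal basis A, and set q_t(x) = ∫_V φ_t(x−y; d) dμ(y) for t > 0, where φ_t(·; d) is the density of N(0, t I_d). Then q_t(x) = (2πt)^{-(d−k)/2} e^{−‖x − AAᵀx‖²/(2t)} · μ(V) · p_t^low(Aᵀx), where p_t^low is the density of (Aᵀ)_# (μ/μ(V)) ∗ N(0, t I_k) on R^k. -/
open MeasureTheory Real

lemma aux_norm_sq {d k : ℕ} (A : EuclideanSpace ℝ (Fin k) →L[ℝ] EuclideanSpace ℝ (Fin d))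
    (hA : ∀ z, ContinuousLinearMap.adjoint A (A z) = z)
    (x y : EuclideanSpace ℝ (Fin d)) (hy : y ∈ Set.range A) :
    ‖x - y‖ ^ 2 = ‖x - A (ContinuousLinearMap.adjoint A x)‖ ^ 2 +
      ‖ContinuousLinearMap.adjoint A x - ContinuousLinearMap.adjoint A y‖ ^ 2 := by
  obtain ⟨w, rfl⟩ := hy
  set B := ContinuousLinearMap.adjoint A with hB
  have hnormA : ∀ z, ‖A z‖ = ‖z‖ := by
    intro z
    have : ‖A z‖ ^ 2 = ‖z‖ ^ 2 := by
      rw [← real_inner_self_eq_norm_sq, ← real_inner_self_eq_norm_sq,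
        ← ContinuousLinearMap.adjoint_inner_left, hA]
    nlinarith [norm_nonneg (A z), norm_nonneg z]
  have hdecomp : x - A w = (x - A (B x)) + A (B x - w) := by
    rw [map_sub]; abel
  have horth : inner ℝ (x - A (B x)) (A (B x - w)) = (0 : ℝ) := by
    rw [← ContinuousLinearMap.adjoint_inner_left, ← hB, map_sub, hA, sub_self,
      inner_zero_left]
  rw [hA, hdecomp, norm_add_sq_real, horth, hnormA]
  ring

/-- Factorization of the Gaussian-smoothed density of a subspace-supported measure:
`q_t(x) = (2πt)^{-(d−k)/2} e^{−‖x−AAᵀx‖²/(2t)} μ(V) p_t^low(Aᵀx)`. -/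
theorem stmt4 {d k : ℕ} (A : EuclideanSpace ℝ (Fin k) →L[ℝ] EuclideanSpace ℝ (Fin d))
    (hA : ∀ z, ContinuousLinearMap.adjoint A (A z) = z)
    (μ : Measure (EuclideanSpace ℝ (Fin d))) [IsProbabilityMeasure μ]
    (hsupp : μ (Set.range A)ᶜ = 0)
    (t : ℝ) (ht : 0 < t)
    (pLow : EuclideanSpace ℝ (Fin k) → ℝ)
    (hpLow : ∀ z, pLow z = (μ (Set.range A)).toReal⁻¹ *
      ∫ y, gpdf k t (z - ContinuousLinearMap.adjoint A y) ∂μ)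
    (x : EuclideanSpace ℝ (Fin d)) :
    (∫ y, gpdf d t (x - y) ∂μ)
      = (2 * π * t) ^ (-((d : ℝ) - k) / 2) *
        Real.exp (-‖x - A (ContinuousLinearMap.adjoint A x)‖ ^ 2 / (2 * t)) *
        (μ (Set.range A)).toReal * pLow (ContinuousLinearMap.adjoint A x) := by
  set B := ContinuousLinearMap.adjoint A with hB
  have hμ1 : μ (Set.range A) = 1 := by
    have h := measure_union_le (μ := μ) (Set.range A) (Set.range A)ᶜ
    rw [Set.union_compl_self, measure_univ, hsupp, add_zero] at h
    exact le_antisymm prob_le_one h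
  have h2πt : (0:ℝ) < 2 * π * t := by positivity
  set c : ℝ := (2 * π * t) ^ (-((d : ℝ) - k) / 2) *
        Real.exp (-‖x - A (B x)‖ ^ 2 / (2 * t)) with hc
  have hae : ∀ᵐ y ∂μ, y ∈ Set.range A := by
    rw [ae_iff]; exact hsupp
  have hkey : ∀ y ∈ Set.range A,
      gpdf d t (x - y) = c * gpdf k t (B x - B y) := by
    intro y hy
    have hnorm := aux_norm_sq A hA x y hy
    simp only [gpdf, hc, ← hB]
    rw [hnorm]
    have hpow : (2 * π * t) ^ (-(d : ℝ) / 2) =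
        (2 * π * t) ^ (-((d : ℝ) - k) / 2) * (2 * π * t) ^ (-(k : ℝ) / 2) := by
      rw [← Real.rpow_add h2πt]; ring_nf
    have hexp : Real.exp (-(‖x - A (B x)‖ ^ 2 + ‖B x - B y‖ ^ 2) / (2 * t)) =
        Real.exp (-‖x - A (B x)‖ ^ 2 / (2 * t)) * Real.exp (-‖B x - B y‖ ^ 2 / (2 * t)) := by
      rw [← Real.exp_add]; congr 1; field_simp; ring
    rw [hpow, hexp]; ring
  have hint : ∫ y, gpdf d t (x - y) ∂μ = ∫ y, c * gpdf k t (B x - B y) ∂μ := by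
    refine integral_congr_ae ?_
    filter_upwards [hae] with y hy using hkey y hy
  rw [hint, MeasureTheory.integral_const_mul, hpLow, hμ1]
  simp [hc]
end

section
/- Let X^{(1)}, …, X^{(N)} be i.i.d. samples from a probability measure p⋆ on R^d supported on a finite union of subspaces V_1, …, V_M with p⋆(V_i ∩ V_j) = 0 for i ≠ j, and define p̂_t(x) = (1/N) Σ_j φ_t(x − X^{(j)}; d). Then Var(p̂_t(x)) ≤ (1/((2πt)^{d/2} N)) Σ_{i=1}^M e^{−‖x − proj_i(x)‖²/(2t)} q_t(i, x), where q_t(i,x) = ∫_{V_i} φ_t(x − y; d) dp_i⋆(y), p_i⋆ is the restriction of p⋆ to V_i, and proj_i is orthogonal projection onto V_i. -/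
open MeasureTheory ProbabilityTheory Real

/-- Variance bound for the kernel density estimator under a union-of-subspaces
support: `Var(p̂_t(x)) ≤ (1/((2πt)^{d/2} N)) Σᵢ e^{−‖x−projᵢ(x)‖²/(2t)} q_t(i,x)`. -/
theorem stmt7 {d M : ℕ} {Ω : Type*} [MeasurableSpace Ω]
    (μ : Measure Ω) [IsProbabilityMeasure μ]
    (p : Measure (EuclideanSpace ℝ (Fin d))) [IsProbabilityMeasure p]
    (V : Fin M → Submodule ℝ (EuclideanSpace ℝ (Fin d)))
    (hsupp : p (⋃ i, (V i : Set (EuclideanSpace ℝ (Fin d))))ᶜ = 0)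
    (hnull : ∀ i j, i ≠ j →
      p ((V i : Set (EuclideanSpace ℝ (Fin d))) ∩ (V j : Set (EuclideanSpace ℝ (Fin d)))) = 0)
    (N : ℕ) (hN : 0 < N) (X : Fin N → Ω → EuclideanSpace ℝ (Fin d))
    (hmeas : ∀ j, Measurable (X j))
    (hiid : iIndepFun X μ)
    (hlaw : ∀ j, μ.map (X j) = p)
    (t : ℝ) (ht : 0 < t) (x : EuclideanSpace ℝ (Fin d)) :
    variance (fun ω => (N : ℝ)⁻¹ * ∑ j, gpdf d t (x - X j ω)) μ
      ≤ (1 / ((2 * π * t) ^ ((d : ℝ) / 2) * N)) *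
        ∑ i, Real.exp (-‖x - ((V i).orthogonalProjectionOnto x : EuclideanSpace ℝ (Fin d))‖ ^ 2
            / (2 * t)) *
          (∫ y in (V i : Set (EuclideanSpace ℝ (Fin d))), gpdf d t (x - y) ∂p) := by
  classical
  have h2πt : (0:ℝ) < 2 * π * t := by positivity
  set c : ℝ := (2 * π * t) ^ (-(d : ℝ) / 2) with hc
  have hcpos : 0 < c := Real.rpow_pos_of_pos h2πt _
  set g : EuclideanSpace ℝ (Fin d) → ℝ := fun y => gpdf d t (x - y) with hgdef
  have hg_eq : ∀ y, g y = c * Real.exp (-‖x - y‖ ^ 2 / (2 * t)) := fun y => rfl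
  have hg_nonneg : ∀ y, 0 ≤ g y := fun y => mul_nonneg hcpos.le (Real.exp_pos _).le
  have hg_le : ∀ y, g y ≤ c := by
    intro y
    rw [hg_eq]
    nth_rewrite 2 [show c = c * 1 by ring]
    refine mul_le_mul_of_nonneg_left ?_ hcpos.le
    rw [Real.exp_le_one_iff]
    have : (0:ℝ) ≤ ‖x - y‖ ^ 2 := by positivity
    have h2t : (0:ℝ) < 2 * t := by positivity
    exact div_nonpos_of_nonpos_of_nonneg (by linarith) h2t.le
  have hg_cont : Continuous g := by
    simp only [hgdef, gpdf]
    fun_prop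
  have hg2_cont : Continuous (fun y => g y ^ 2) := hg_cont.pow 2
  -- integrability of g and g^2 with respect to any finite measure
  have hint : ∀ (ν : Measure (EuclideanSpace ℝ (Fin d))), IsFiniteMeasure ν → Integrable g ν := by
    intro ν hν
    refine (integrable_const c).mono' hg_cont.aestronglyMeasurable
      (Filter.Eventually.of_forall fun y => ?_)
    rw [Real.norm_eq_abs, abs_of_nonneg (hg_nonneg y)]
    exact hg_le y
  have hint2 : ∀ (ν : Measure (EuclideanSpace ℝ (Fin d))), IsFiniteMeasure ν →
      Integrable (fun y => g y ^ 2) ν := by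
    intro ν hν
    refine (integrable_const (c ^ 2)).mono' hg2_cont.aestronglyMeasurable
      (Filter.Eventually.of_forall fun y => ?_)
    rw [Real.norm_eq_abs, abs_of_nonneg (sq_nonneg _)]
    exact pow_le_pow_left₀ (hg_nonneg y) (hg_le y) 2
  -- notation for the exponential weights
  set e : Fin M → ℝ := fun i =>
    Real.exp (-‖x - ((V i).orthogonalProjectionOnto x : EuclideanSpace ℝ (Fin d))‖ ^ 2 / (2 * t))
    with he
  have he_nonneg : ∀ i, 0 ≤ e i := fun i => (Real.exp_pos _).le
  have hVclosed : ∀ i, MeasurableSet ((V i : Set (EuclideanSpace ℝ (Fin d)))) := fun i =>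
    (Submodule.closed_of_finiteDimensional (V i)).measurableSet
  -- pointwise bound on V i
  have hpt : ∀ i, ∀ y ∈ (V i : Set (EuclideanSpace ℝ (Fin d))), g y ^ 2 ≤ (c * e i) * g y := by
    intro i y hy
    have hmin : ‖x - ((V i).orthogonalProjectionOnto x : EuclideanSpace ℝ (Fin d))‖ ≤ ‖x - y‖ := by
      rw [← Submodule.starProjection_apply, Submodule.starProjection_minimal]
      exact ciInf_le ⟨0, by rintro _ ⟨z, rfl⟩; exact norm_nonneg _⟩ (⟨y, hy⟩ : V i)
    have hsq : ‖x - ((V i).orthogonalProjectionOnto x : EuclideanSpace ℝ (Fin d))‖ ^ 2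
        ≤ ‖x - y‖ ^ 2 := pow_le_pow_left₀ (norm_nonneg _) hmin 2
    have h2t : (0:ℝ) < 2 * t := by positivity
    have hgle : g y ≤ c * e i := by
      rw [hg_eq, he]
      refine mul_le_mul_of_nonneg_left ?_ hcpos.le
      exact Real.exp_le_exp.2 ((div_le_div_iff_of_pos_right h2t).2 (by linarith))
    calc g y ^ 2 = g y * g y := sq (g y) ▸ by ring
      _ ≤ (c * e i) * g y := mul_le_mul_of_nonneg_right hgle (hg_nonneg y)
  -- key bound: ∫ g² dp ≤ ∑ i, (c * e i) * ∫_{V i} g dp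
  have hkey : ∫ y, g y ^ 2 ∂p ≤ ∑ i, (c * e i) * ∫ y in (V i : Set _), g y ∂p := by
    set U : Set (EuclideanSpace ℝ (Fin d)) := ⋃ i, (V i : Set _) with hU
    have hUm : MeasurableSet U := MeasurableSet.iUnion hVclosed
    have h1 : ∫ y, g y ^ 2 ∂p = ∫ y in U, g y ^ 2 ∂p := by
      rw [← integral_add_compl hUm (hint2 p inferInstance)]
      rw [setIntegral_measure_zero _ hsupp, add_zero]
    have h2 : ∫ y in U, g y ^ 2 ∂p ≤ ∑ i, ∫ y in (V i : Set _), g y ^ 2 ∂p := by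
      have hle : p.restrict U ≤ Measure.sum (fun i => p.restrict (V i)) :=
        Measure.restrict_iUnion_le
      have hintsum : Integrable (fun y => g y ^ 2)
          (Measure.sum (fun i => p.restrict (V i))) := by
        rw [Measure.sum_fintype]
        exact integrable_finset_sum_measure.2 fun i _ => hint2 _ inferInstance
      have := integral_mono_measure hle
        (Filter.Eventually.of_forall fun y => sq_nonneg (g y)) hintsum
      rwa [Measure.sum_fintype, integral_finset_sum_measure
        (fun i _ => hint2 _ inferInstance)] at this
    have h3 : ∀ i, ∫ y in (V i : Set _), g y ^ 2 ∂p
        ≤ (c * e i) * ∫ y in (V i : Set _), g y ∂p := by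
      intro i
      rw [← integral_const_mul]
      exact setIntegral_mono_on (hint2 _ inferInstance).integrableOn
        ((hint _ inferInstance).integrableOn.const_mul _) (hVclosed i) (hpt i)
    calc ∫ y, g y ^ 2 ∂p = ∫ y in U, g y ^ 2 ∂p := h1
      _ ≤ ∑ i, ∫ y in (V i : Set _), g y ^ 2 ∂p := h2
      _ ≤ ∑ i, (c * e i) * ∫ y in (V i : Set _), g y ∂p := Finset.sum_le_sum fun i _ => h3 i
  -- variance of each summand
  have hY_meas : ∀ j, Measurable (fun ω => g (X j ω)) := fun j => hg_cont.measurable.comp (hmeas j)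
  have hY_mem : ∀ j, MemLp (fun ω => g (X j ω)) 2 μ := by
    intro j
    refine (memLp_top_of_bound (hY_meas j).aestronglyMeasurable c
      (Filter.Eventually.of_forall fun ω => ?_)).mono_exponent le_top
    rw [Real.norm_eq_abs, abs_of_nonneg (hg_nonneg _)]
    exact hg_le _
  have hvar_j : ∀ j, variance (fun ω => g (X j ω)) μ
      ≤ ∑ i, (c * e i) * ∫ y in (V i : Set _), g y ∂p := by
    intro j
    refine (variance_le_expectation_sq (hY_meas j).aestronglyMeasurable).trans ?_
    have : (μ[(fun ω => g (X j ω)) ^ 2]) = ∫ y, g y ^ 2 ∂p := by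
      rw [← hlaw j, integral_map (hmeas j).aemeasurable hg2_cont.aestronglyMeasurable]
      rfl
    rw [this]
    exact hkey
  -- independence of the composed variables
  have hiidg : iIndepFun (fun j => fun ω => g (X j ω)) μ :=
    hiid.comp (fun _ => g) (fun _ => hg_cont.measurable)
  have hsum_var : variance (fun ω => ∑ j, g (X j ω)) μ
      = ∑ j, variance (fun ω => g (X j ω)) μ := by
    have heq : (fun ω => ∑ j, g (X j ω)) = ∑ j, (fun ω => g (X j ω)) := by
      funext ω; simp
    rw [heq]
    exact IndepFun.variance_sum (fun j _ => hY_mem j)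
      (fun j _ k _ hjk => hiidg.indepFun hjk)
  -- put it together
  have hB_nonneg : 0 ≤ ∑ i, (c * e i) * ∫ y in (V i : Set _), g y ∂p := by
    refine Finset.sum_nonneg fun i _ => mul_nonneg (mul_nonneg hcpos.le (he_nonneg i)) ?_
    exact setIntegral_nonneg (hVclosed i) fun y _ => hg_nonneg y
  have hmain : variance (fun ω => (N : ℝ)⁻¹ * ∑ j, g (X j ω)) μ
      ≤ (N : ℝ)⁻¹ * ∑ i, (c * e i) * ∫ y in (V i : Set _), g y ∂p := by
    rw [variance_const_mul, hsum_var]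
    have hsum_le : ∑ j : Fin N, variance (fun ω => g (X j ω)) μ
        ≤ (N : ℝ) * ∑ i, (c * e i) * ∫ y in (V i : Set _), g y ∂p := by
      calc ∑ j : Fin N, variance (fun ω => g (X j ω)) μ
          ≤ ∑ _j : Fin N, ∑ i, (c * e i) * ∫ y in (V i : Set _), g y ∂p :=
            Finset.sum_le_sum fun j _ => hvar_j j
        _ = (N : ℝ) * ∑ i, (c * e i) * ∫ y in (V i : Set _), g y ∂p := by
            rw [Finset.sum_const, Finset.card_univ, Fintype.card_fin, nsmul_eq_mul]
    have hNpos : (0:ℝ) < N := Nat.cast_pos.2 hN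
    calc ((N : ℝ)⁻¹) ^ 2 * ∑ j : Fin N, variance (fun ω => g (X j ω)) μ
        ≤ ((N : ℝ)⁻¹) ^ 2 * ((N : ℝ) * ∑ i, (c * e i) * ∫ y in (V i : Set _), g y ∂p) :=
          mul_le_mul_of_nonneg_left hsum_le (by positivity)
      _ = (N : ℝ)⁻¹ * ∑ i, (c * e i) * ∫ y in (V i : Set _), g y ∂p := by
          field_simp
  refine hmain.trans_eq ?_
  have hcinv : c = ((2 * π * t) ^ ((d : ℝ) / 2))⁻¹ := by
    rw [hc, ← Real.rpow_neg h2πt.le, neg_div]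
  rw [Finset.mul_sum, Finset.mul_sum]
  refine Finset.sum_congr rfl fun i _ => ?_
  rw [hcinv]
  have hne : ((2 * π * t) ^ ((d : ℝ) / 2)) ≠ 0 :=
    (Real.rpow_pos_of_pos h2πt _).ne'
  have hNne : (N : ℝ) ≠ 0 := Nat.cast_ne_zero.2 hN.ne'
  rw [one_div, mul_inv]
  ring
end

section
/- Let p_t be the density of ν ∗ N(0, t I_k) for a probability measure ν on R^k, and let s_t = ∇ log p_t be its score. Then for all x ∈ R^k, ‖s_t(x)‖² ≤ (2/t) log(1 / ((2πt)^{k/2} p_t(x))). -/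
open MeasureTheory Real

lemma aux_mul_exp_le_sqrt {t a : ℝ} (ht : 0 < t) :
    a * Real.exp (-a ^ 2 / (2 * t)) ≤ Real.sqrt t := by
  have hst : 0 < Real.sqrt t := Real.sqrt_pos.2 ht
  have h1 : (a / Real.sqrt t) ^ 2 / 2 = a ^ 2 / (2 * t) := by
    rw [div_pow, Real.sq_sqrt ht.le]; ring
  have hb : a / Real.sqrt t ≤ Real.exp (a ^ 2 / (2 * t)) := by
    have h0 : a / Real.sqrt t ≤ (a / Real.sqrt t) ^ 2 / 2 + 1 := by
      nlinarith [sq_nonneg (a / Real.sqrt t - 1)]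
    have h2 := Real.add_one_le_exp (a ^ 2 / (2 * t))
    linarith [h1 ▸ h0]
  have hb' : a ≤ Real.exp (a ^ 2 / (2 * t)) * Real.sqrt t := (div_le_iff₀ hst).1 hb
  calc a * Real.exp (-a ^ 2 / (2 * t))
      ≤ (Real.exp (a ^ 2 / (2 * t)) * Real.sqrt t) * Real.exp (-a ^ 2 / (2 * t)) :=
        mul_le_mul_of_nonneg_right hb' (Real.exp_pos _).le
    _ = Real.sqrt t * Real.exp (a ^ 2 / (2 * t) + -a ^ 2 / (2 * t)) := by
        rw [Real.exp_add]; ring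
    _ = Real.sqrt t := by
        rw [show a ^ 2 / (2 * t) + -a ^ 2 / (2 * t) = 0 by ring, Real.exp_zero, mul_one]

lemma aux_u_exp_neg_le_one (u : ℝ) : u * Real.exp (-u) ≤ 1 := by
  have h := Real.add_one_le_exp u
  have h2 : u * Real.exp (-u) ≤ Real.exp u * Real.exp (-u) :=
    mul_le_mul_of_nonneg_right (by linarith) (Real.exp_pos _).le
  rwa [← Real.exp_add, show u + -u = 0 by ring, Real.exp_zero] at h2

lemma aux_hasFDerivAt_G {k : ℕ} (t : ℝ) (ht : 0 < t) (y z : EuclideanSpace ℝ (Fin k)) :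
    HasFDerivAt (fun w : EuclideanSpace ℝ (Fin k) => Real.exp (-‖w - y‖ ^ 2 / (2 * t)))
      (Real.exp (-‖z - y‖ ^ 2 / (2 * t)) • (t⁻¹ • innerSL ℝ (y - z))) z := by
  have h1 : HasFDerivAt (fun w : EuclideanSpace ℝ (Fin k) => w - y)
      (ContinuousLinearMap.id ℝ _) z := (hasFDerivAt_id z).sub_const y
  have h2 := h1.norm_sq
  have h3 : HasFDerivAt (fun w : EuclideanSpace ℝ (Fin k) => -‖w - y‖ ^ 2 / (2 * t))
      ((-(2 * t)⁻¹ : ℝ) • (2 • (innerSL ℝ (z - y)).comp (ContinuousLinearMap.id ℝ _))) z :=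
    (h2.const_mul (-(2 * t)⁻¹ : ℝ)).congr_of_eventuallyEq
      (Filter.Eventually.of_forall fun w => by ring)
  refine h3.exp.congr_fderiv ?_
  ext h
  simp only [ContinuousLinearMap.smul_apply, ContinuousLinearMap.coe_smul', Pi.smul_apply,
    ContinuousLinearMap.comp_apply, ContinuousLinearMap.id_apply, innerSL_apply_apply,
    smul_eq_mul]
  have ht' : (t : ℝ) ≠ 0 := ht.ne'
  have : (inner ℝ (y - z) h : ℝ) = -inner ℝ (z - y) h := by
    rw [← inner_neg_left, neg_sub]
  rw [this]
  field_simp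
  ring

/-- Pointwise score bound in terms of the density level:
`‖s_t(x)‖² ≤ (2/t) log(1 / ((2πt)^{k/2} p_t(x)))`. -/
theorem stmt12 {k : ℕ} (ν : Measure (EuclideanSpace ℝ (Fin k))) [IsProbabilityMeasure ν]
    (t : ℝ) (ht : 0 < t) (pt : EuclideanSpace ℝ (Fin k) → ℝ)
    (hpt : ∀ x, pt x = ∫ y, gpdf k t (x - y) ∂ν)
    (x : EuclideanSpace ℝ (Fin k)) :
    ‖gradient (fun z => Real.log (pt z)) x‖ ^ 2
      ≤ (2 / t) * Real.log (1 / ((2 * π * t) ^ ((k : ℝ) / 2) * pt x)) := by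
  have ht' : (t : ℝ) ≠ 0 := ht.ne'
  set G : EuclideanSpace ℝ (Fin k) → EuclideanSpace ℝ (Fin k) → ℝ :=
    fun z y => Real.exp (-‖z - y‖ ^ 2 / (2 * t)) with hG
  set F' : EuclideanSpace ℝ (Fin k) → EuclideanSpace ℝ (Fin k) →
      (EuclideanSpace ℝ (Fin k) →L[ℝ] ℝ) :=
    fun z y => G z y • (t⁻¹ • innerSL ℝ (y - z)) with hF'
  set c : ℝ := (2 * π * t) ^ (-(k : ℝ) / 2) with hc
  have h2πt : (0 : ℝ) < 2 * π * t := by positivity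
  have hc_pos : 0 < c := Real.rpow_pos_of_pos h2πt _
  -- continuity facts
  have hGcont : ∀ z, Continuous (G z) := by
    intro z; apply Real.continuous_exp.comp; fun_prop
  have hF'cont : Continuous (F' x) := by
    apply Continuous.smul (hGcont x)
    exact ((innerSL ℝ (E := EuclideanSpace ℝ (Fin k))).continuous.comp (continuous_id.sub continuous_const)).const_smul t⁻¹
  -- norm of F'
  have hnormF' : ∀ z y, ‖F' z y‖ = t⁻¹ * (‖z - y‖ * G z y) := by
    intro z y
    simp only [hF', hG]
    rw [norm_smul (β := EuclideanSpace ℝ (Fin k) →L[ℝ] ℝ), norm_smul (β := EuclideanSpace ℝ (Fin k) →L[ℝ] ℝ), innerSL_apply_norm, Real.norm_eq_abs, Real.norm_eq_abs,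
      abs_of_pos (Real.exp_pos _), abs_of_nonneg (inv_nonneg.2 ht.le), norm_sub_rev]
    ring
  -- derivative of q
  have hq : HasFDerivAt (fun z => ∫ y, G z y ∂ν) (∫ y, F' x y ∂ν) x := by
    apply hasFDerivAt_integral_of_dominated_of_fderiv_le
      (F' := F') (bound := fun _ => t⁻¹ * Real.sqrt t) (Metric.ball_mem_nhds x one_pos)
    · exact Filter.Eventually.of_forall fun z => (hGcont z).aestronglyMeasurable
    · exact (integrable_const (1 : ℝ)).mono' (hGcont x).aestronglyMeasurable
        (Filter.Eventually.of_forall fun y => by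
          rw [Real.norm_eq_abs, abs_of_pos (Real.exp_pos _)]
          exact Real.exp_le_one_iff.2
            (div_nonpos_of_nonpos_of_nonneg (neg_nonpos.2 (by positivity)) (by positivity)))
    · exact hF'cont.aestronglyMeasurable
    · refine Filter.Eventually.of_forall fun y z _ => ?_
      rw [hnormF']
      exact mul_le_mul_of_nonneg_left (aux_mul_exp_le_sqrt ht) (inv_nonneg.2 ht.le)
    · exact integrable_const _
    · exact Filter.Eventually.of_forall fun y z _ => aux_hasFDerivAt_G t ht y z
  -- basic facts about q
  have hG_le_one : ∀ z y, G z y ≤ 1 := fun z y =>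
    Real.exp_le_one_iff.2
      (div_nonpos_of_nonpos_of_nonneg (neg_nonpos.2 (by positivity)) (by positivity))
  have hGint : Integrable (G x) ν :=
    (integrable_const (1 : ℝ)).mono' (hGcont x).aestronglyMeasurable
      (Filter.Eventually.of_forall fun y => by
        rw [Real.norm_eq_abs, abs_of_pos (Real.exp_pos _)]; exact hG_le_one x y)
  have hq_pos : 0 < ∫ y, G x y ∂ν := integral_exp_pos hGint
  have hq_le_one : (∫ y, G x y ∂ν) ≤ 1 := by
    calc (∫ y, G x y ∂ν) ≤ ∫ _, (1 : ℝ) ∂ν := integral_mono hGint (integrable_const _)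
          (fun y => hG_le_one x y)
    _ = 1 := by simp
  set q : ℝ := ∫ y, G x y ∂ν with hqdef
  -- pt in terms of q
  have hpt_fun : pt = fun z => c * ∫ y, G z y ∂ν := by
    funext z
    rw [hpt z]
    simp only [gpdf, hG, hc]
    rw [integral_const_mul]
  have hpt_pos : 0 < pt x := by rw [hpt_fun]; exact mul_pos hc_pos hq_pos
  have hptd : HasFDerivAt pt (c • ∫ y, F' x y ∂ν) x := by
    rw [hpt_fun]; exact hq.const_mul c
  have hlog : HasFDerivAt (fun z => Real.log (pt z))
      (q⁻¹ • ∫ y, F' x y ∂ν) x := by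
    have h := hptd.log hpt_pos.ne'
    refine h.congr_fderiv ?_
    have hptx : pt x = c * q := by rw [hpt_fun]
    rw [hptx, smul_smul]
    congr 1
    field_simp
  -- gradient norm
  have hgradnorm : ‖gradient (fun z => Real.log (pt z)) x‖ = q⁻¹ * ‖∫ y, F' x y ∂ν‖ := by
    rw [gradient, hlog.fderiv, LinearIsometryEquiv.norm_map,
      norm_smul, Real.norm_eq_abs, abs_of_nonneg (inv_nonneg.2 hq_pos.le)]
  -- bound the norm of the derivative integral
  have hQle : ‖∫ y, F' x y ∂ν‖ ≤ t⁻¹ * ∫ y, ‖x - y‖ * G x y ∂ν := by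
    calc ‖∫ y, F' x y ∂ν‖ ≤ ∫ y, ‖F' x y‖ ∂ν := norm_integral_le_integral_norm _
    _ = ∫ y, t⁻¹ * (‖x - y‖ * G x y) ∂ν := by simp only [hnormF']
    _ = t⁻¹ * ∫ y, ‖x - y‖ * G x y ∂ν := integral_const_mul _ _
  -- Cauchy-Schwarz
  set f : EuclideanSpace ℝ (Fin k) → ℝ :=
    fun y => ‖x - y‖ * Real.exp (-‖x - y‖ ^ 2 / (2 * (2 * t))) with hfdef
  set g : EuclideanSpace ℝ (Fin k) → ℝ :=
    fun y => Real.exp (-‖x - y‖ ^ 2 / (2 * (2 * t))) with hgdef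
  have hfg : ∀ y, f y * g y = ‖x - y‖ * G x y := by
    intro y
    simp only [hfdef, hgdef, hG]
    rw [mul_assoc, ← Real.exp_add]
    congr 2
    field_simp
    ring
  have hf2 : ∀ y, f y ^ (2 : ℝ) = ‖x - y‖ ^ 2 * G x y := by
    intro y
    rw [show (2 : ℝ) = ((2 : ℕ) : ℝ) by norm_num, Real.rpow_natCast]
    simp only [hfdef, hG]
    rw [mul_pow, pow_two (Real.exp _), ← Real.exp_add]
    congr 2
    field_simp
    ring
  have hg2 : ∀ y, g y ^ (2 : ℝ) = G x y := by
    intro y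
    rw [show (2 : ℝ) = ((2 : ℕ) : ℝ) by norm_num, Real.rpow_natCast]
    simp only [hgdef, hG]
    rw [pow_two (Real.exp _), ← Real.exp_add]
    congr 1
    field_simp
    ring
  have hfcont : Continuous f := by
    simp only [hfdef]
    apply Continuous.mul
    · exact (continuous_const.sub continuous_id).norm
    · apply Real.continuous_exp.comp; fun_prop
  have hgcont : Continuous g := by
    simp only [hgdef]
    apply Real.continuous_exp.comp; fun_prop
  have h2t : (0 : ℝ) < 2 * t := by positivity
  have hfmem : MemLp f (ENNReal.ofReal 2) ν :=
    MemLp.of_bound hfcont.aestronglyMeasurable (Real.sqrt (2 * t))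
      (Filter.Eventually.of_forall fun y => by
        simp only [hfdef]
        rw [Real.norm_eq_abs, abs_of_nonneg (by positivity)]
        exact aux_mul_exp_le_sqrt h2t)
  have hgmem : MemLp g (ENNReal.ofReal 2) ν :=
    MemLp.of_bound hgcont.aestronglyMeasurable 1
      (Filter.Eventually.of_forall fun y => by
        simp only [hgdef]
        rw [Real.norm_eq_abs, abs_of_pos (Real.exp_pos _)]
        exact Real.exp_le_one_iff.2
          (div_nonpos_of_nonpos_of_nonneg (neg_nonpos.2 (by positivity)) (by positivity)))
  have hpq : Real.HolderConjugate 2 2 := by rw [Real.holderConjugate_iff_eq_conjExponent one_lt_two]; norm_num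
  have hHolder : (∫ y, f y * g y ∂ν)
      ≤ (∫ y, f y ^ (2 : ℝ) ∂ν) ^ ((1 : ℝ) / 2) * (∫ y, g y ^ (2 : ℝ) ∂ν) ^ ((1 : ℝ) / 2) :=
    integral_mul_le_Lp_mul_Lq_of_nonneg hpq
      (Filter.Eventually.of_forall fun y => by simp only [hfdef]; positivity)
      (Filter.Eventually.of_forall fun y => by simp only [hgdef]; positivity)
      hfmem hgmem
  -- Jensen
  have hnml_eq : ∀ y, Real.negMulLog (G x y) = ‖x - y‖ ^ 2 / (2 * t) * G x y := by
    intro y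
    simp only [hG]
    rw [Real.negMulLog, Real.log_exp]
    ring
  have hnml_int : Integrable (fun y => Real.negMulLog (G x y)) ν :=
    (integrable_const (1 : ℝ)).mono'
      ((Real.continuous_negMulLog.comp (hGcont x)).aestronglyMeasurable)
      (Filter.Eventually.of_forall fun y => by
        rw [Real.norm_eq_abs, hnml_eq y, abs_of_nonneg (by positivity)]
        have h := aux_u_exp_neg_le_one (‖x - y‖ ^ 2 / (2 * t))
        rw [← neg_div] at h
        exact h)
  have hjen : (∫ y, Real.negMulLog (G x y) ∂ν) ≤ Real.negMulLog q :=
    Real.concaveOn_negMulLog.le_map_integral Real.continuous_negMulLog.continuousOn isClosed_Ici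
      (Filter.Eventually.of_forall fun y => Set.mem_Ici.2 (Real.exp_pos _).le) hGint hnml_int
  set L : ℝ := Real.negMulLog q with hLdef
  have hL0 : 0 ≤ L := Real.negMulLog_nonneg hq_pos.le hq_le_one
  have hI2 : (∫ y, f y ^ (2 : ℝ) ∂ν) ≤ 2 * t * L := by
    have heq : ∀ y, f y ^ (2 : ℝ) = 2 * t * Real.negMulLog (G x y) := by
      intro y
      rw [hf2 y, hnml_eq y]
      field_simp
    calc (∫ y, f y ^ (2 : ℝ) ∂ν) = ∫ y, 2 * t * Real.negMulLog (G x y) ∂ν := by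
          simp only [heq]
    _ = 2 * t * ∫ y, Real.negMulLog (G x y) ∂ν := integral_const_mul _ _
    _ ≤ 2 * t * L := mul_le_mul_of_nonneg_left hjen (by positivity)
  have hg2int : (∫ y, g y ^ (2 : ℝ) ∂ν) = q := by
    simp only [hg2, hqdef]
  have hI2nonneg : 0 ≤ ∫ y, f y ^ (2 : ℝ) ∂ν := by
    refine integral_nonneg fun y => ?_
    show (0 : ℝ) ≤ f y ^ (2 : ℝ)
    rw [hf2 y]
    positivity
  -- combine
  have hQfinal : ‖∫ y, F' x y ∂ν‖
      ≤ t⁻¹ * ((2 * t * L) ^ ((1 : ℝ) / 2) * q ^ ((1 : ℝ) / 2)) := by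
    refine hQle.trans ?_
    apply mul_le_mul_of_nonneg_left ?_ (inv_nonneg.2 ht.le)
    calc (∫ y, ‖x - y‖ * G x y ∂ν) = ∫ y, f y * g y ∂ν := by simp only [hfg]
    _ ≤ (∫ y, f y ^ (2 : ℝ) ∂ν) ^ ((1 : ℝ) / 2) * (∫ y, g y ^ (2 : ℝ) ∂ν) ^ ((1 : ℝ) / 2) :=
        hHolder
    _ ≤ (2 * t * L) ^ ((1 : ℝ) / 2) * q ^ ((1 : ℝ) / 2) := by
        rw [hg2int]
        exact mul_le_mul_of_nonneg_right
          (Real.rpow_le_rpow hI2nonneg hI2 (by norm_num))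
          (Real.rpow_nonneg hq_pos.le _)
  -- rewrite the RHS of the goal
  have hkey : (2 * π * t) ^ ((k : ℝ) / 2) * pt x = q := by
    rw [hpt_fun]
    show (2 * π * t) ^ ((k : ℝ) / 2) * (c * ∫ y, G x y ∂ν) = q
    rw [← mul_assoc, hc, ← Real.rpow_add h2πt,
      show (k : ℝ) / 2 + -(k : ℝ) / 2 = 0 by ring, Real.rpow_zero, one_mul]
  have hlog1q : Real.log (1 / q) = L / q := by
    rw [one_div, Real.log_inv, hLdef, Real.negMulLog]
    field_simp
  rw [hgradnorm, hkey, hlog1q]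
  -- final algebra
  have h2tL : 0 ≤ 2 * t * L := by positivity
  have hsq1 : ((2 * t * L) ^ ((1 : ℝ) / 2)) ^ 2 = 2 * t * L := by
    rw [← Real.rpow_natCast ((2 * t * L) ^ ((1 : ℝ) / 2)) 2, ← Real.rpow_mul h2tL]
    norm_num
  have hsq2 : (q ^ ((1 : ℝ) / 2)) ^ 2 = q := by
    rw [← Real.rpow_natCast (q ^ ((1 : ℝ) / 2)) 2, ← Real.rpow_mul hq_pos.le]
    norm_num
  have hstep := pow_le_pow_left₀ (norm_nonneg _) hQfinal 2
  calc (q⁻¹ * ‖∫ y, F' x y ∂ν‖) ^ 2 = q⁻¹ ^ 2 * ‖∫ y, F' x y ∂ν‖ ^ 2 := by ring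
  _ ≤ q⁻¹ ^ 2 * (t⁻¹ * ((2 * t * L) ^ ((1 : ℝ) / 2) * q ^ ((1 : ℝ) / 2))) ^ 2 :=
      mul_le_mul_of_nonneg_left hstep (by positivity)
  _ = q⁻¹ ^ 2 * (t⁻¹ ^ 2 * (((2 * t * L) ^ ((1 : ℝ) / 2)) ^ 2 * ((q ^ ((1 : ℝ) / 2)) ^ 2))) := by
      ring
  _ = 2 / t * (L / q) := by
      rw [hsq1, hsq2]
      field_simp
end
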